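/- Under the hypotheses of the convergence theorem for the fast adaptive gradient method with μ = m = 0, constant errors δ_k = δ and δ̃_k = δ̃ for all k, and with L_k ≤ 2·L for all k = 1, …, N for some L > 0, one has for all N ≥ 1: f(x_N) − f(x⋆) ≤ 8·L·V[x₀](x⋆)/N² + 2·N·δ + 8·L·δ̃/N. -/

import Mathlib

open RealInnerProductSpace Finset

/-- The Bregman divergence `V[y](x) = d(x) - d(y) - ⟪∇d(y), x - y⟫` generated by `d`
with gradient map `Dd`. -/
noncomputable def breg {E : Type*} [NormedAddCommGroup E] [InnerProductSpace ℝ E]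
    (d : E → ℝ) (Dd : E → E) (y x : E) : ℝ :=
  d x - d y - ⟪Dd y, x - y⟫

/-- `g` is a subgradient of `ψ` at `z` (relative to the set `Q`). -/
def IsSubgradOn {E : Type*} [NormedAddCommGroup E] [InnerProductSpace ℝ E]
    (Q : Set E) (ψ : E → ℝ) (z g : E) : Prop :=
  ∀ x ∈ Q, ψ z + ⟪g, x - z⟫ ≤ ψ x

/-- `ψ` is `m`-strongly convex relative to `d` on `Q`, where `V` is the Bregman
divergence generated by `d`. -/
def StrongRelConvexOn {E : Type*} [NormedAddCommGroup E] [InnerProductSpace ℝ E]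
    (Q : Set E) (V : E → E → ℝ) (m : ℝ) (ψ : E → ℝ) : Prop :=
  ∀ z ∈ Q, ∀ g : E, IsSubgradOn Q ψ z g → ∀ x ∈ Q, ψ z + ⟪g, x - z⟫ + m * V z x ≤ ψ x

/-- `y` is a `δ`-approximate minimizer of `Ψ` on `Q`: there exists a subgradient `h`
of `Ψ` at `y` such that `⟪h, x - y⟫ ≥ -δ` for all `x ∈ Q`. -/
def IsApproxMinOn {E : Type*} [NormedAddCommGroup E] [InnerProductSpace ℝ E]
    (Q : Set E) (Ψ : E → ℝ) (δ : ℝ) (y : E) : Prop :=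
  y ∈ Q ∧ ∃ h : E, IsSubgradOn Q Ψ y h ∧ ∀ x ∈ Q, -δ ≤ ⟪h, x - y⟫

lemma breg_slope_tendsto {E : Type*} [NormedAddCommGroup E] [InnerProductSpace ℝ E] [CompleteSpace E]
    {d : E → ℝ} {Dd : E → E} {u : E} (hd : HasGradientAt d (Dd u) u) (v : E) :
    Filter.Tendsto (fun t : ℝ => breg d Dd u (u + t • v) / t)
      (nhdsWithin 0 (Set.Ioi 0)) (nhds 0) := by
  have hline : HasDerivAt (fun t : ℝ => u + t • v) v 0 := by
    simpa using ((hasDerivAt_id (0:ℝ)).smul_const v).const_add u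
  have hcomp : HasDerivAt (fun t : ℝ => d (u + t • v)) ⟪Dd u, v⟫ 0 := by
    have h1 : HasFDerivAt d (InnerProductSpace.toDual ℝ E (Dd u)) ((fun t : ℝ => u + t • v) 0) := by
      simpa using hd.hasFDerivAt
    have h3 := h1.comp_hasDerivAt 0 hline
    simp at h3
    exact h3
  have h2 : HasDerivAt (fun t : ℝ => d u + t * ⟪Dd u, v⟫) ⟪Dd u, v⟫ 0 := by
    simpa using ((hasDerivAt_id (0:ℝ)).mul_const (⟪Dd u, v⟫ : ℝ)).const_add (d u)
  have hfun : (fun t : ℝ => breg d Dd u (u + t • v)) =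
      fun t : ℝ => d (u + t • v) - (d u + t * ⟪Dd u, v⟫) := by
    funext t
    simp [breg, add_sub_cancel_left, real_inner_smul_right]
    ring
  have h0 : HasDerivAt (fun t : ℝ => breg d Dd u (u + t • v)) 0 0 := by
    rw [hfun]
    have h02 := hcomp.sub h2
    rw [sub_self] at h02
    exact h02
  have := hasDerivAt_iff_tendsto_slope.mp h0
  have hmono : Filter.Tendsto (slope (fun t : ℝ => breg d Dd u (u + t • v)) 0)
      (nhdsWithin 0 (Set.Ioi 0)) (nhds 0) :=
    this.mono_left (nhdsWithin_mono 0 (fun x hx => ne_of_gt hx))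
  refine hmono.congr (fun t => ?_)
  simp [slope_def_field, breg]

lemma approx_min_key {E : Type*} [NormedAddCommGroup E] [InnerProductSpace ℝ E] [CompleteSpace E]
    {Q : Set E} (hQ : Convex ℝ Q) {d : E → ℝ} {Dd : E → E}
    (hd_diff : ∀ x, HasGradientAt d (Dd x) x)
    {ψ : E → ℝ} (hψ : ConvexOn ℝ Q ψ) {a : ℝ} (ha : 0 ≤ a)
    {b u w : E} (hw : w ∈ Q) {δt : ℝ}
    (happ : IsApproxMinOn Q (fun z => a * ψ z + breg d Dd b z) δt u) :
    a * ψ u + breg d Dd b u + breg d Dd u w ≤ a * ψ w + breg d Dd b w + δt := by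
  obtain ⟨huQ, h, hsub, hlow⟩ := happ
  have key : ⟪h, w - u⟫ ≤ (a * ψ w + breg d Dd b w) - (a * ψ u + breg d Dd b u)
      - breg d Dd u w := by
    set C : ℝ := (a * ψ w + breg d Dd b w) - (a * ψ u + breg d Dd b u) - breg d Dd u w with hC
    have hbound : ∀ t ∈ Set.Ioc (0:ℝ) 1,
        ⟪h, w - u⟫ ≤ C + breg d Dd u (u + t • (w - u)) / t := by
      intro t ht
      have ht0 : (0:ℝ) < t := ht.1
      have ht1 : t ≤ 1 := ht.2
      have hz : u + t • (w - u) = (1 - t) • u + t • w := by module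
      have hzQ : u + t • (w - u) ∈ Q := by
        rw [hz]; exact hQ huQ hw (by linarith) ht0.le (by ring)
      have h1 : (a * ψ u + breg d Dd b u) + t * ⟪h, w - u⟫ ≤
          a * ψ (u + t • (w - u)) + breg d Dd b (u + t • (w - u)) := by
        have := hsub _ hzQ
        simpa [add_sub_cancel_left, real_inner_smul_right] using this
      have h2 : a * ψ (u + t • (w - u)) ≤ a * ((1 - t) * ψ u + t * ψ w) := by
        refine mul_le_mul_of_nonneg_left ?_ ha
        rw [hz]
        simpa [smul_eq_mul] using hψ.2 huQ hw (by linarith) ht0.le (by ring)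
      have h3 : breg d Dd b (u + t • (w - u)) - breg d Dd u (u + t • (w - u)) =
          (1 - t) * (breg d Dd b u) + t * (breg d Dd b w - breg d Dd u w) := by
        simp [breg, inner_sub_right, inner_add_right, real_inner_smul_right]
        ring
      rw [hC, ← sub_le_iff_le_add', le_div_iff₀ ht0]
      nlinarith [h1, h2, h3]
    have htend : Filter.Tendsto (fun t : ℝ => C + breg d Dd u (u + t • (w - u)) / t)
        (nhdsWithin 0 (Set.Ioi 0)) (nhds (C + 0)) :=
      tendsto_const_nhds.add (breg_slope_tendsto (hd_diff u) (w - u))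
    have hle := ge_of_tendsto htend
      (Filter.eventually_of_mem (Ioc_mem_nhdsGT_of_mem ⟨le_refl 0, zero_lt_one⟩) hbound)
    simpa using hle
  have hl := hlow w hw
  linarith

set_option maxHeartbeats 1000000 in
/-- Remark 3.6: convergence rate of the fast adaptive gradient method with
a `(δ, L, 0, 0, V, ‖·‖)`-model, constant errors `δ`, `δ̃` and adaptive constants `L_k ≤ 2L`. -/
theorem stmt10
    {E : Type*} [NormedAddCommGroup E] [InnerProductSpace ℝ E] [FiniteDimensional ℝ E]
    (Q : Set E) (hQ : Convex ℝ Q)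
    (d : E → ℝ) (Dd : E → E)
    (hd_conv : ConvexOn ℝ Set.univ d) (hd_diff : ∀ x, HasGradientAt d (Dd x) x)
    (f : E → ℝ) (δ δt Lb : ℝ) (hδ : 0 ≤ δ) (hδt : 0 ≤ δt) (hLb : 0 < Lb)
    (N : ℕ) (hN : 1 ≤ N)
    (x u y : ℕ → E) (A α L : ℕ → ℝ)
    (hxQ : ∀ k ≤ N, x k ∈ Q) (huQ : ∀ k ≤ N, u k ∈ Q)
    (hA0 : A 0 = 0) (hu0 : u 0 = x 0)
    (hα : ∀ k < N, 0 < α (k + 1))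
    (hArec : ∀ k < N, A (k + 1) = A k + α (k + 1))
    (hL : ∀ k < N, 0 < L (k + 1)) (hLle : ∀ k < N, L (k + 1) ≤ 2 * Lb)
    (hroot : ∀ k < N, L (k + 1) * α (k + 1) ^ 2 = A k + α (k + 1))
    (hlargest : ∀ k < N, ∀ β : ℝ, L (k + 1) * β ^ 2 = A k + β → β ≤ α (k + 1))
    (hy : ∀ k < N, y (k + 1) = (A (k + 1))⁻¹ • (α (k + 1) • u k + A k • x k))
    (hx : ∀ k < N, x (k + 1) = (A (k + 1))⁻¹ • (α (k + 1) • u (k + 1) + A k • x k))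
    (hsc : ∀ a ∈ Q, ∀ b ∈ Q, 1 / 2 * ‖a - b‖ ^ 2 ≤ breg d Dd b a)
    (hmodel : ∀ k < N, ∃ (ψ : E → ℝ) (c cp : ℝ),
      ConvexOn ℝ Q ψ ∧ ψ (y (k + 1)) = 0 ∧
      (∀ w ∈ Q, c + ψ w ≤ f w) ∧
      IsApproxMinOn Q (fun w => α (k + 1) * ψ w + breg d Dd (u k) w) δt (u (k + 1)) ∧
      f (x (k + 1)) ≤ cp + δ ∧
      cp ≤ c + ψ (x (k + 1)) + L (k + 1) / 2 * ‖x (k + 1) - y (k + 1)‖ ^ 2 + δ)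
    (xs : E) (hxs : xs ∈ Q) (hmin : ∀ w ∈ Q, f xs ≤ f w) :
    f (x N) - f xs ≤
      8 * Lb * breg d Dd (x 0) xs / (N : ℝ) ^ 2 + 2 * N * δ + 8 * Lb * δt / N := by
  classical
  -- nonnegativity and positivity of A
  have hA_nonneg : ∀ k, k ≤ N → 0 ≤ A k := by
    intro k
    induction k with
    | zero => intro _; simp [hA0]
    | succ n ih =>
      intro hn
      rw [hArec n (by omega)]
      have h1 := hα n (by omega)
      have h2 := ih (by omega)
      linarith
  have hA_pos : ∀ k, 1 ≤ k → k ≤ N → 0 < A k := by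
    intro k hk1 hk
    obtain ⟨n, rfl⟩ : ∃ n, k = n + 1 := ⟨k - 1, by omega⟩
    rw [hArec n (by omega)]
    have h1 := hα n (by omega)
    have h2 := hA_nonneg n (by omega)
    linarith
  have hA_mono : ∀ i j, i ≤ j → j ≤ N → A i ≤ A j := by
    intro i j hij hjN
    induction j with
    | zero => simp_all
    | succ n ih =>
      rcases Nat.lt_or_ge i (n+1) with hlt | hge
      · have := ih (by omega) (by omega)
        have h1 := hα n (by omega)
        rw [hArec n (by omega)]
        linarith
      · have : i = n + 1 := by omega
        subst this; exact le_refl _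
  -- lower bound on A N
  have hsqrtLb : (0:ℝ) < Real.sqrt (2 * Lb) := Real.sqrt_pos.mpr (by linarith)
  have hsqrtA : ∀ k, k ≤ N → (k : ℝ) ≤ 2 * Real.sqrt (2 * Lb) * Real.sqrt (A k) := by
    intro k
    induction k with
    | zero => intro _; simp; positivity
    | succ n ih =>
      intro hn
      have hkN : n < N := by omega
      have ihn := ih (by omega)
      have hAn : 0 ≤ A n := hA_nonneg n (by omega)
      have hAn1 : 0 < A (n+1) := hA_pos (n+1) (by omega) (by omega)
      set s := Real.sqrt (A (n+1)) with hs
      set r := Real.sqrt (A n) with hr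
      set l := Real.sqrt (L (n+1)) with hl
      set m := Real.sqrt (2 * Lb) with hm
      have hs2 : s ^ 2 = A (n+1) := Real.sq_sqrt hAn1.le
      have hr2 : r ^ 2 = A n := Real.sq_sqrt hAn
      have hl2 : l ^ 2 = L (n+1) := Real.sq_sqrt (hL n hkN).le
      have hspos : 0 < s := Real.sqrt_pos.mpr hAn1
      have hrnn : 0 ≤ r := Real.sqrt_nonneg _
      have hlpos : 0 < l := Real.sqrt_pos.mpr (hL n hkN)
      have hrs : r ≤ s := Real.sqrt_le_sqrt (by rw [hArec n hkN]; linarith [hα n hkN])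
      have hlm : l ≤ m := Real.sqrt_le_sqrt (hLle n hkN)
      have hαeq : α (n+1) = s ^ 2 - r ^ 2 := by
        rw [hs2, hr2, hArec n hkN]; ring
      have e0 : (l * (s ^ 2 - r ^ 2)) ^ 2 = s ^ 2 := by
        have := hroot n hkN
        rw [← hαeq]
        rw [hs2, hArec n hkN]
        nlinarith [this, hl2]
      have e1 : l * (s ^ 2 - r ^ 2) = s := by
        have hpos1 : 0 < l * (s ^ 2 - r ^ 2) := by
          rw [← hαeq]; exact mul_pos hlpos (hα n hkN)
        have h2 : (l * (s ^ 2 - r ^ 2) - s) * (l * (s ^ 2 - r ^ 2) + s) = 0 := by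
          linear_combination e0
        rcases mul_eq_zero.mp h2 with hcase | hcase
        · linarith
        · linarith
      push_cast
      nlinarith [e1, mul_nonneg (sub_nonneg.mpr hlm) hspos.le,
        mul_nonneg hlpos.le (sub_nonneg.mpr hrs), mul_pos hlpos hspos]
  -- the telescoping estimate
  have main : ∀ k, k ≤ N → A k * f (x k) + breg d Dd (u k) xs ≤
      A k * f xs + breg d Dd (u 0) xs + 2 * δ * (∑ i ∈ Finset.range k, A (i+1)) + k * δt := by
    intro k
    induction k with
    | zero => intro _; simp [hA0]
    | succ n ih =>
      intro hn
      have hkN : n < N := by omega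
      have ihn := ih (by omega)
      obtain ⟨ψ, cc, cp, hψconv, hψy, hmlb, happ, hfx1, hcp⟩ := hmodel n hkN
      have hAn : 0 ≤ A n := hA_nonneg n (by omega)
      have hAn1 : 0 < A (n+1) := hA_pos (n+1) (by omega) (by omega)
      have hαn := hα n hkN
      have hLn := hL n hkN
      have hxkQ := hxQ n (by omega)
      have hxk1Q := hxQ (n+1) (by omega)
      have hukQ := huQ n (by omega)
      have huk1Q := huQ (n+1) (by omega)
      have hA1ne : A (n+1) ≠ 0 := ne_of_gt hAn1
      -- x_{k+1} - y_{k+1}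
      have hdiff : x (n+1) - y (n+1) = (α (n+1) / A (n+1)) • (u (n+1) - u n) := by
        rw [hx n hkN, hy n hkN]
        match_scalars <;> field_simp <;> ring
      have hnorm : ‖x (n+1) - y (n+1)‖ ^ 2 =
          (α (n+1) / A (n+1)) ^ 2 * ‖u (n+1) - u n‖ ^ 2 := by
        rw [hdiff, norm_smul, mul_pow, Real.norm_eq_abs, sq_abs]
      have hsc1 := hsc (u (n+1)) huk1Q (u n) hukQ
      have hLα : L (n+1) * α (n+1) ^ 2 = A (n+1) := by
        rw [hroot n hkN, hArec n hkN]
      have hquad : A (n+1) * (L (n+1) / 2 * ‖x (n+1) - y (n+1)‖ ^ 2) ≤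
          breg d Dd (u n) (u (n+1)) := by
        rw [hnorm]
        set Z : ℝ := ‖u (n+1) - u n‖ ^ 2 with hZ
        have hαA : α (n+1) ^ 2 / A (n+1) ^ 2 = 1 / (L (n+1) * A (n+1)) := by
          rw [div_eq_div_iff (by positivity) (by positivity)]
          linear_combination A (n+1) * hLα
        have heq : A (n+1) * (L (n+1) / 2 * ((α (n+1) / A (n+1)) ^ 2 * Z))
            = 1 / 2 * Z := by
          rw [div_pow, hαA]
          field_simp
        rw [heq]; exact hsc1
      -- convexity of ψ
      have hxeq : x (n+1) = (A n / A (n+1)) • x n + (α (n+1) / A (n+1)) • u (n+1) := by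
        rw [hx n hkN]
        match_scalars <;> field_simp <;> ring
      have hconv : A (n+1) * ψ (x (n+1)) ≤ A n * ψ (x n) + α (n+1) * ψ (u (n+1)) := by
        have hsum1 : A n / A (n+1) + α (n+1) / A (n+1) = 1 := by
          field_simp; linarith [hArec n hkN]
        have h5 := hψconv.2 hxkQ huk1Q (div_nonneg hAn hAn1.le) (div_nonneg hαn.le hAn1.le) hsum1
        rw [← hxeq] at h5
        simp only [smul_eq_mul] at h5
        have h6 := mul_le_mul_of_nonneg_left h5 hAn1.le
        calc A (n+1) * ψ (x (n+1)) ≤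
            A (n+1) * (A n / A (n+1) * ψ (x n) + α (n+1) / A (n+1) * ψ (u (n+1))) := h6
          _ = A n * ψ (x n) + α (n+1) * ψ (u (n+1)) := by field_simp
      -- key inequality from approximate minimization
      have hkey := approx_min_key hQ hd_diff hψconv hαn.le hxs happ
      -- model lower bounds
      have hm1 := hmlb (x n) hxkQ
      have hm2 := hmlb xs hxs
      -- scaled versions
      have hstep : A (n+1) * f (x (n+1)) ≤
          A (n+1) * (cc + ψ (x (n+1)) + L (n+1) / 2 * ‖x (n+1) - y (n+1)‖ ^ 2 + 2 * δ) :=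
        mul_le_mul_of_nonneg_left (by linarith) hAn1.le
      have hm1' : A n * ψ (x n) ≤ A n * (f (x n) - cc) :=
        mul_le_mul_of_nonneg_left (by linarith) hAn
      have hm2' : α (n+1) * ψ xs ≤ α (n+1) * (f xs - cc) :=
        mul_le_mul_of_nonneg_left (by linarith) hαn.le
      have hAsplit : A (n+1) = A n + α (n+1) := hArec n hkN
      have hccsplit : A (n+1) * cc = A n * cc + α (n+1) * cc := by rw [hAsplit]; ring
      have hper : A (n+1) * f (x (n+1)) + breg d Dd (u (n+1)) xs ≤
          A n * f (x n) + breg d Dd (u n) xs + α (n+1) * f xs + 2 * A (n+1) * δ + δt := by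
        nlinarith [hstep, hconv, hquad, hkey, hm1', hm2', hccsplit]
      rw [Finset.sum_range_succ]
      push_cast
      have hAfs : A (n+1) * f xs = A n * f xs + α (n+1) * f xs := by rw [hAsplit]; ring
      linarith [hper, ihn]
  -- finish
  have hmainN := main N le_rfl
  have hbregN : 0 ≤ breg d Dd (u N) xs := by
    have := hsc xs hxs (u N) (huQ N le_rfl)
    nlinarith [sq_nonneg ‖xs - u N‖]
  have hB0 : 0 ≤ breg d Dd (u 0) xs := by
    have := hsc xs hxs (u 0) (huQ 0 (by omega))
    nlinarith [sq_nonneg ‖xs - u 0‖]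
  have hANpos : 0 < A N := hA_pos N hN le_rfl
  have hsum : ∑ i ∈ Finset.range N, A (i+1) ≤ N * A N := by
    calc ∑ i ∈ Finset.range N, A (i+1) ≤ ∑ _i ∈ Finset.range N, A N :=
          Finset.sum_le_sum (fun i hi => hA_mono (i+1) N (by
            simp only [Finset.mem_range] at hi; omega) le_rfl)
      _ = N * A N := by rw [Finset.sum_const, Finset.card_range]; simp [nsmul_eq_mul]
  have hNpos : (0:ℝ) < (N:ℝ) := by exact_mod_cast Nat.pos_of_ne_zero (by omega)
  have hANlb : (N:ℝ) ^ 2 ≤ 8 * Lb * A N := by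
    have h1 := hsqrtA N le_rfl
    have h2 : Real.sqrt (A N) ^ 2 = A N := Real.sq_sqrt hANpos.le
    have h3 : Real.sqrt (2 * Lb) ^ 2 = 2 * Lb := Real.sq_sqrt (by linarith)
    nlinarith [h1, Real.sqrt_nonneg (A N), hNpos]
  -- combine
  have hstep1 : f (x N) - f xs ≤ (breg d Dd (u 0) xs + N * δt) / A N + 2 * N * δ := by
    rw [← sub_le_iff_le_add, le_div_iff₀ hANpos]
    have hδsum : 2 * δ * (∑ i ∈ Finset.range N, A (i+1)) ≤ 2 * δ * (N * A N) := by
      apply mul_le_mul_of_nonneg_left hsum (by linarith)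
    nlinarith [hmainN, hbregN, hδsum]
  have hANinv : (breg d Dd (u 0) xs + N * δt) / A N ≤
      8 * Lb * (breg d Dd (u 0) xs + N * δt) / (N:ℝ) ^ 2 := by
    rw [div_le_div_iff₀ hANpos (by positivity)]
    have hnum : 0 ≤ breg d Dd (u 0) xs + N * δt := by positivity
    nlinarith [hANlb, hnum]
  have hsplit : 8 * Lb * (breg d Dd (u 0) xs + N * δt) / (N:ℝ) ^ 2 =
      8 * Lb * breg d Dd (u 0) xs / (N:ℝ) ^ 2 + 8 * Lb * δt / N := by
    field_simp
  rw [← hu0]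
  linarith [hstep1, hANinv, hsplit.le, hsplit.ge]
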